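/- arXiv:1307.2419 — 2 statements merged into one kernel-verified Lean document; each statement's English description precedes it below -/
import Mathlib

section
/- The Jacobian determinant of the transformation λ = u(a/|u| - 1) on {u : 0 < |u| < a} equals -(a/|u| - 1)^(n-1). -/
open Matrix in
/-- The Jacobian determinant of `λ = (a/|u| - 1) • u` on `{0 < |u| < a}`
equals `-(a/|u| - 1)^(n-1)`. -/

theorem stmt3 (n : ℕ) (hn : 1 ≤ n) (a : ℝ) (ha : 0 < a)
    (R : EuclideanSpace ℝ (Fin n) → EuclideanSpace ℝ (Fin n))
    (hR : ∀ u, R u = (a / ‖u‖ - 1) • u)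
    (u : EuclideanSpace ℝ (Fin n)) (hu0 : 0 < ‖u‖) (hua : ‖u‖ < a) :
    LinearMap.det ((fderiv ℝ R u) : EuclideanSpace ℝ (Fin n) →ₗ[ℝ] EuclideanSpace ℝ (Fin n)) =
      -(a / ‖u‖ - 1) ^ (n - 1) := by
  have hne : ‖u‖ ≠ 0 := ne_of_gt hu0
  -- derivative of the norm
  have hN : HasFDerivAt (fun x : EuclideanSpace ℝ (Fin n) => ‖x‖) (‖u‖⁻¹ • innerSL ℝ u) u := by
    have h1 : HasFDerivAt (fun x : EuclideanSpace ℝ (Fin n) => ‖x‖ ^ 2) (2 • innerSL ℝ u) u :=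
      (hasStrictFDerivAt_norm_sq u).hasFDerivAt
    have h2 : HasDerivAt Real.sqrt (1 / (2 * Real.sqrt (‖u‖ ^ 2))) (‖u‖ ^ 2) :=
      Real.hasDerivAt_sqrt (by positivity)
    have h3 := h2.comp_hasFDerivAt u h1
    convert h3 using 1
    · rfl
    · rfl
    · rfl
    · funext x; simp [Real.sqrt_sq (norm_nonneg x)]
    rw [Real.sqrt_sq (norm_nonneg u)]
    ext v
    simp [two_smul]
    ring
  -- derivative of the scalar factor
  have hψ : HasDerivAt (fun t : ℝ => a / t - 1) (a * -(‖u‖ ^ 2)⁻¹) ‖u‖ := by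
    simpa [div_eq_mul_inv] using ((hasDerivAt_inv hne).const_mul a).sub_const 1
  have hs : HasFDerivAt (fun x : EuclideanSpace ℝ (Fin n) => a / ‖x‖ - 1)
      ((a * -(‖u‖ ^ 2)⁻¹) • (‖u‖⁻¹ • innerSL ℝ u)) u := hψ.comp_hasFDerivAt u hN
  set c : ℝ := a / ‖u‖ - 1 with hc
  set L : EuclideanSpace ℝ (Fin n) →L[ℝ] EuclideanSpace ℝ (Fin n) :=
    c • ContinuousLinearMap.id ℝ (EuclideanSpace ℝ (Fin n)) +
      ((a * -(‖u‖ ^ 2)⁻¹) • (‖u‖⁻¹ • innerSL ℝ u)).smulRight u with hL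
  have hRd : HasFDerivAt R L u := by
    have h : HasFDerivAt (fun x : EuclideanSpace ℝ (Fin n) => (a / ‖x‖ - 1) • x) L u :=
      hs.smul (hasFDerivAt_id u)
    have hfun : R = fun x : EuclideanSpace ℝ (Fin n) => (a / ‖x‖ - 1) • x := funext hR
    rwa [hfun]
  rw [hRd.fderiv]
  -- compute the determinant via matrices
  set r : ℝ := a * -(‖u‖ ^ 2)⁻¹ * ‖u‖⁻¹ with hr
  have hc0 : 0 < c := by
    have : 1 < a / ‖u‖ := (one_lt_div hu0).2 hua
    simpa [hc] using sub_pos.2 this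
  set b := PiLp.basisFun 2 ℝ (Fin n) with hb
  have hnorm2 : (∑ i, u i * u i) = ‖u‖ ^ 2 := by
    have h := @real_inner_self_eq_norm_sq (EuclideanSpace ℝ (Fin n)) _ _ u
    rw [← h, PiLp.inner_apply]
    simp [pow_two]
  have hmat : LinearMap.toMatrix b b (L : EuclideanSpace ℝ (Fin n) →ₗ[ℝ] EuclideanSpace ℝ (Fin n)) =
      c • (1 : Matrix (Fin n) (Fin n) ℝ) + r • Matrix.vecMulVec (fun i => u i) (fun i => u i) := by
    ext i j
    rw [LinearMap.toMatrix_apply]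
    simp [hL, hb, Matrix.vecMulVec_apply, Matrix.one_apply, PiLp.basisFun_apply,
      EuclideanSpace.single_apply, PiLp.inner_apply, RCLike.inner_apply, hr]
    ring
  have hdet : LinearMap.det (L : EuclideanSpace ℝ (Fin n) →ₗ[ℝ] EuclideanSpace ℝ (Fin n)) =
      (c • (1 : Matrix (Fin n) (Fin n) ℝ) +
        r • Matrix.vecMulVec (fun i => u i) (fun i => u i)).det := by
    rw [← LinearMap.det_toMatrix b, hmat]
  rw [hdet]
  have hfact : c • (1 : Matrix (Fin n) (Fin n) ℝ) +
      r • Matrix.vecMulVec (fun i => u i) (fun i => u i) =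
      c • ((1 : Matrix (Fin n) (Fin n) ℝ) +
        Matrix.replicateCol Unit ((r / c) • fun i => u i) * Matrix.replicateRow Unit (fun i => u i)) := by
    ext i j
    simp [Matrix.vecMulVec_apply, Matrix.mul_apply, Matrix.one_apply]
    rcases eq_or_ne i j with h | h <;> simp [h] <;> field_simp <;> ring
  rw [hfact, Matrix.det_smul, Matrix.det_one_add_replicateCol_mul_replicateRow]
  have hdot : (fun i => u i) ⬝ᵥ ((r / c) • fun i => u i) = (r / c) * ‖u‖ ^ 2 := by
    simp only [dotProduct, Pi.smul_apply, smul_eq_mul, ← hnorm2, Finset.mul_sum]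
    exact Finset.sum_congr rfl fun i _ => by ring
  rw [hdot]
  have hr2 : r * ‖u‖ ^ 2 = -(a / ‖u‖) := by
    rw [hr]
    field_simp
  have hkey : 1 + r / c * ‖u‖ ^ 2 = -1 / c := by
    have hcne : c ≠ 0 := ne_of_gt hc0
    rw [div_mul_eq_mul_div, hr2]
    have h9 : c - a / ‖u‖ = -1 := by rw [hc]; ring
    rw [← h9, sub_div, div_self hcne]
    ring
  rw [hkey, Fintype.card_fin]
  have hn' : n - 1 + 1 = n := Nat.succ_pred_eq_of_pos hn
  have hcp : c ^ n = c ^ (n - 1) * c := by rw [← pow_succ, hn']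
  rw [hcp]
  field_simp
end

section
/- Let g₀,…,g_k : ℝ → ℝ be even functions, each essentially nonzero (nonzero on a set of positive measure), and suppose each g_j satisfies g_j(s)² ≤ C/sⁿ for all s ≥ s₀ for some s₀ ≥ 0, C > 0, n ≥ 1. Fix distinct points 0 = a₀ < a₁ < … < a_k. If for some index i there exist constants C̃_j (j ≠ i) such that g_i(r(|λ| - a_i)) = Σ_{j≠i} C̃_j g_j(r(|λ| - a_j)) for all λ ∈ ℝⁿ and all r > 0, then g_i ≡ 0, a contradiction. Hence no such representation exists. -/
open MeasureTheory Set Finset Filter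

lemma aux_tendsto_atTop (n : ℕ) (hn : 1 ≤ n) (g : ℝ → ℝ)
    (hdecay : ∃ s₀ ≥ (0:ℝ), ∃ C > (0:ℝ), ∀ s ≥ s₀, (g s) ^ 2 ≤ C / s ^ n) :
    Tendsto g atTop (nhds 0) := by
  obtain ⟨s₀, hs₀, C, hC, hle⟩ := hdecay
  have hdiv : Tendsto (fun s : ℝ => C / s ^ n) atTop (nhds 0) :=
    Tendsto.div_atTop tendsto_const_nhds (tendsto_pow_atTop (by omega))
  have hsqrt : Tendsto (fun s : ℝ => Real.sqrt (C / s ^ n)) atTop (nhds 0) := by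
    have := (Real.continuous_sqrt.tendsto 0).comp hdiv
    simpa [Function.comp_def] using this
  rw [tendsto_zero_iff_abs_tendsto_zero]
  apply squeeze_zero' (Eventually.of_forall fun s => abs_nonneg _) _ hsqrt
  filter_upwards [eventually_ge_atTop s₀] with s hs
  exact Real.abs_le_sqrt (hle s hs)

lemma aux_tendsto_atBot (n : ℕ) (hn : 1 ≤ n) (g : ℝ → ℝ)
    (heven : ∀ s, g (-s) = g s)
    (hdecay : ∃ s₀ ≥ (0:ℝ), ∃ C > (0:ℝ), ∀ s ≥ s₀, (g s) ^ 2 ≤ C / s ^ n) :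
    Tendsto g atBot (nhds 0) := by
  have h := (aux_tendsto_atTop n hn g hdecay).comp tendsto_neg_atBot_atTop
  refine h.congr fun s => ?_
  simp [Function.comp, heven]

/-- Uniqueness lemma: for even, essentially nonzero functions `g_j` with the
decay `g_j(s)² ≤ C/sⁿ` for large `s`, no `g_i(r(|λ| - a_i))` can be represented
as a linear combination of the `g_j(r(|λ| - a_j))`, `j ≠ i`. -/
theorem stmt7 (n k : ℕ) (hn : 1 ≤ n)
    (a : Fin (k+1) → ℝ) (ha0 : a 0 = 0) (hamono : StrictMono a)
    (g : Fin (k+1) → ℝ → ℝ)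
    (heven : ∀ j s, g j (-s) = g j s)
    (hnz : ∀ j, 0 < volume {s : ℝ | g j s ≠ 0})
    (hdecay : ∀ j, ∃ s₀ ≥ (0:ℝ), ∃ C > (0:ℝ), ∀ s ≥ s₀, (g j s) ^ 2 ≤ C / s ^ n) :
    ¬ ∃ (i : Fin (k+1)) (c : Fin (k+1) → ℝ),
        ∀ (l : EuclideanSpace ℝ (Fin n)), ∀ r > (0:ℝ),
          g i (r * (‖l‖ - a i)) =
            ∑ j ∈ Finset.univ.erase i, c j * g j (r * (‖l‖ - a j)) := by
  rintro ⟨i, c, heq⟩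
  have hai : 0 ≤ a i := ha0 ▸ hamono.monotone (Fin.zero_le i)
  -- g i vanishes on [0,∞)
  have hkey : ∀ s : ℝ, 0 ≤ s → g i s = 0 := by
    intro s hs
    -- the representation, rewritten
    have hrep : ∀ r : ℝ, 0 < r →
        g i s = ∑ j ∈ Finset.univ.erase i, c j * g j (s + r * (a i - a j)) := by
      intro r hr
      set t : ℝ := a i + s / r with ht
      have htnn : 0 ≤ t := by positivity
      set l : EuclideanSpace ℝ (Fin n) :=
        t • EuclideanSpace.single (⟨0, by omega⟩ : Fin n) (1:ℝ) with hl
      have hnorm : ‖l‖ = t := by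
        rw [hl, norm_smul, EuclideanSpace.norm_single]
        simp [abs_of_nonneg htnn]
      have h := heq l r hr
      rw [hnorm] at h
      have h1 : r * (t - a i) = s := by rw [ht, mul_sub, mul_add, mul_div_cancel₀ s hr.ne']; ring
      have h2 : ∀ j, r * (t - a j) = s + r * (a i - a j) := by
        intro j; rw [ht, mul_sub, mul_add, mul_div_cancel₀ s hr.ne']; ring
      rw [h1] at h
      rw [h]
      exact Finset.sum_congr rfl fun j _ => by rw [h2 j]
    -- each term tends to 0 as r → ∞
    have hsum : Tendsto (fun r : ℝ => ∑ j ∈ Finset.univ.erase i,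
        c j * g j (s + r * (a i - a j))) atTop (nhds 0) := by
      have : Tendsto (fun r : ℝ => ∑ j ∈ Finset.univ.erase i,
          c j * g j (s + r * (a i - a j))) atTop (nhds (∑ j ∈ Finset.univ.erase i, c j * 0)) := by
        apply tendsto_finset_sum
        intro j hj
        apply Tendsto.const_mul
        have hne : a i ≠ a j := fun h => (Finset.mem_erase.mp hj).1 (hamono.injective h.symm)
        rcases lt_or_gt_of_ne hne with hlt | hgt
        · -- a i < a j : argument → -∞
          have harg : Tendsto (fun r : ℝ => s + r * (a i - a j)) atTop atBot := by
            apply tendsto_atBot_add_const_left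
            exact Tendsto.atTop_mul_const_of_neg (by linarith) tendsto_id |>.congr fun r => rfl
          exact (aux_tendsto_atBot n hn (g j) (heven j) (hdecay j)).comp harg
        · -- a i > a j : argument → +∞
          have harg : Tendsto (fun r : ℝ => s + r * (a i - a j)) atTop atTop := by
            apply tendsto_atTop_add_const_left
            exact Tendsto.atTop_mul_const (by linarith) tendsto_id |>.congr fun r => rfl
          exact (aux_tendsto_atTop n hn (g j) (hdecay j)).comp harg
      simpa using this
    have hconst : Tendsto (fun _ : ℝ => g i s) atTop (nhds (g i s)) := tendsto_const_nhds
    have : Tendsto (fun _ : ℝ => g i s) atTop (nhds 0) := by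
      refine hsum.congr' ?_
      filter_upwards [eventually_gt_atTop 0] with r hr
      exact (hrep r hr).symm
    exact tendsto_nhds_unique hconst this
  have hzero : ∀ s : ℝ, g i s = 0 := by
    intro s
    rcases le_or_gt 0 s with h | h
    · exact hkey s h
    · rw [← heven i s]; exact hkey (-s) (by linarith)
  have : {s : ℝ | g i s ≠ 0} = ∅ := by
    ext s; simp [hzero s]
  have h := hnz i
  rw [this] at h
  simp at h
end
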